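/- Let C be a symmetric monoidal category with unit object 𝟙. If (C₁, c₁ : C₁ → 𝟙) and (C₂, c₂ : C₂ → 𝟙) are coidempotent objects of C, then there is at most one morphism f : C₁ → C₂ satisfying c₂ ∘ f = c₁. In other words, the full subcategory of the over category C/𝟙 spanned by the coidempotent objects is a thin category (equivalent to a poset). -/

import Mathlib

open CategoryTheory CategoryTheory.Limits MonoidalCategory

universe v u

/-- For a coidempotent object `(C₀, c)` in a braided category, the braiding on
`C₀ ⊗ C₀` is the identity. -/
lemma coidem_braiding_eq_id {C : Type u} [Category.{v} C] [MonoidalCategory C]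
    [BraidedCategory C] {C₀ : C} (c : C₀ ⟶ 𝟙_ C) (h : IsIso (C₀ ◁ c)) :
    (β_ C₀ C₀).hom = 𝟙 (C₀ ⊗ C₀) := by
  obtain ⟨k, hk⟩ : ∃ k : C₀ ⊗ C₀ ⟶ C₀, k = (C₀ ◁ c) ≫ (ρ_ C₀).hom := ⟨_, rfl⟩
  obtain ⟨l, hl⟩ : ∃ l : C₀ ⊗ C₀ ⟶ C₀, l = (c ▷ C₀) ≫ (λ_ C₀).hom := ⟨_, rfl⟩
  haveI : IsIso k := by rw [hk]; infer_instance
  have hlk : l = (β_ C₀ C₀).hom ≫ k := by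
    rw [hk, ← Category.assoc, ← BraidedCategory.braiding_naturality_left c C₀,
      Category.assoc, braiding_rightUnitor, hl]
  haveI : IsIso l := by rw [hlk]; infer_instance
  haveI : IsIso (c ▷ C₀) := by
    have : c ▷ C₀ = l ≫ (λ_ C₀).inv := by simp [hl]
    rw [this]; infer_instance
  -- pure coherence: capping with `c` after `k` or after `l` agree
  have hkc : k ≫ c = l ≫ c := by
    rw [hk, hl, Category.assoc, Category.assoc, ← rightUnitor_naturality,
      ← leftUnitor_naturality, unitors_equal, ← Category.assoc, ← Category.assoc,
      whisker_exchange]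
  have key : (C₀ ◁ l) ≫ k = (C₀ ◁ k) ≫ k := by
    conv_lhs => rw [hk]
    conv_rhs => rw [hk]
    rw [← Category.assoc, ← Category.assoc, ← MonoidalCategory.whiskerLeft_comp,
      ← MonoidalCategory.whiskerLeft_comp, ← hk, hkc]
  have hN : (C₀ ◁ (β_ C₀ C₀).hom) ≫ ((C₀ ◁ k) ≫ k) = 𝟙 _ ≫ ((C₀ ◁ k) ≫ k) := by
    rw [Category.id_comp, ← Category.assoc, ← MonoidalCategory.whiskerLeft_comp, ← hlk,
      key]
  have hwβ : C₀ ◁ (β_ C₀ C₀).hom = 𝟙 (C₀ ⊗ (C₀ ⊗ C₀)) :=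
    (cancel_mono ((C₀ ◁ k) ≫ k)).mp hN
  haveI : IsIso (c ▷ (C₀ ⊗ C₀)) := by rw [whiskerRight_tensor]; infer_instance
  have hexch := whisker_exchange c (β_ C₀ C₀).hom
  rw [hwβ, Category.id_comp] at hexch
  -- hexch : c ▷ (C₀ ⊗ C₀) = c ▷ (C₀ ⊗ C₀) ≫ 𝟙_C ◁ β
  have h1 : 𝟙_ C ◁ (β_ C₀ C₀).hom = 𝟙 (𝟙_ C ⊗ (C₀ ⊗ C₀)) := by
    apply (cancel_epi (c ▷ (C₀ ⊗ C₀))).mp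
    rw [Category.comp_id]
    exact hexch.symm
  have : 𝟙_ C ◁ (β_ C₀ C₀).hom = 𝟙_ C ◁ 𝟙 (C₀ ⊗ C₀) := by
    rw [h1, MonoidalCategory.whiskerLeft_id]
  exact (whiskerLeft_iff _ _).mp this

/-- In a symmetric monoidal category, given two coidempotent objects
`(C₁, c₁)` and `(C₂, c₂)` (i.e. `C₀ ◁ c : C₀ ⊗ C₀ ⟶ C₀ ⊗ 𝟙` is an isomorphism),
there is at most one morphism `f : C₁ ⟶ C₂` with `f ≫ c₂ = c₁`; that is, the full
subcategory of the over category `C/𝟙` spanned by the coidempotent objects is thin. -/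
theorem coidempotent_hom_unique {C : Type u} [Category.{v} C] [MonoidalCategory C]
    [SymmetricCategory C] {C₁ C₂ : C} (c₁ : C₁ ⟶ 𝟙_ C) (c₂ : C₂ ⟶ 𝟙_ C)
    (h₁ : IsIso (C₁ ◁ c₁)) (h₂ : IsIso (C₂ ◁ c₂))
    (f g : C₁ ⟶ C₂) (hf : f ≫ c₂ = c₁) (hg : g ≫ c₂ = c₁) : f = g := by
  have b₁ := coidem_braiding_eq_id c₁ h₁
  have b₂ := coidem_braiding_eq_id c₂ h₂
  have nat := BraidedCategory.braiding_naturality f g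
  rw [b₁, b₂, Category.comp_id, Category.id_comp] at nat
  -- nat : f ⊗ g = g ⊗ f
  have e1 : (f ⊗ₘ g) ≫ (C₂ ◁ c₂) = (C₁ ◁ c₁) ≫ (f ▷ 𝟙_ C) := by
    rw [MonoidalCategory.tensorHom_def, Category.assoc, ← MonoidalCategory.whiskerLeft_comp, hg,
      whisker_exchange]
  have e2 : (g ⊗ₘ f) ≫ (C₂ ◁ c₂) = (C₁ ◁ c₁) ≫ (g ▷ 𝟙_ C) := by
    rw [MonoidalCategory.tensorHom_def, Category.assoc, ← MonoidalCategory.whiskerLeft_comp, hf,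
      whisker_exchange]
  rw [nat, e2] at e1
  have hfg : f ▷ 𝟙_ C = g ▷ 𝟙_ C := (cancel_epi (C₁ ◁ c₁)).mp e1.symm
  have := congrArg (fun t => (ρ_ C₁).inv ≫ t ≫ (ρ_ C₂).hom) hfg
  simpa using this
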